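/- Let p ∈ (0, 1/2], α₀ := (1−p)/2, β₀ := p/2, and let π be the pmf on {0,1} × {0,1} with π(x,y) = α₀ if x = y and π(x,y) = β₀ if x ≠ y; its marginals π_X and π_Y are both uniform on {0,1}. Then 𝓗(π_X, π_Y ‖ π) = log(1/β₀), and H(π) = 2α₀ log(1/α₀) + 2β₀ log(1/β₀) ≤ log(1/β₀), with equality in the latter inequality if and only if p = 1/2. -/
import Mathlib


open scoped BigOperators

noncomputable def negLogE (t : ℝ) : EReal :=
  if t = 0 then (⊤ : EReal) else ((Real.log t⁻¹ : ℝ) : EReal)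

def IsCoupling {X Y : Type*} [Fintype X] [Fintype Y]
    (PX : X → ℝ) (PY : Y → ℝ) (Q : X × Y → ℝ) : Prop :=
  (∀ p, 0 ≤ Q p) ∧ (∀ x, ∑ y, Q (x, y) = PX x) ∧ (∀ y, ∑ x, Q (x, y) = PY y)

noncomputable def maxCrossEnt {X Y : Type*} [Fintype X] [Fintype Y]
    (PX : X → ℝ) (PY : Y → ℝ) (π : X × Y → ℝ) : EReal :=
  sSup {s : EReal | ∃ Q, IsCoupling PX PY Q ∧
    s = ∑ p : X × Y, (Q p : EReal) * negLogE (π p)}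

noncomputable def entropy {X : Type*} [Fintype X] (P : X → ℝ) : ℝ :=
  ∑ x, P x * Real.log (P x)⁻¹

lemma ecoe_sum {ι : Type*} (s : Finset ι) (f : ι → ℝ) :
    ((∑ i ∈ s, f i : ℝ) : EReal) = ∑ i ∈ s, ((f i : ℝ) : EReal) := by
  induction s using Finset.cons_induction with
  | empty => simp
  | cons a s ha ih => rw [Finset.sum_cons, Finset.sum_cons, EReal.coe_add, ih]

/-- for the DSBS `π`, `𝓗(π_X, π_Y ‖ π) = log(1/β₀)`,
`H(π) = 2α₀ log(1/α₀) + 2β₀ log(1/β₀) ≤ log(1/β₀)`, with equality iff `p = 1/2`. -/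
theorem stmt_5 (p : ℝ) (hp0 : 0 < p) (hp2 : p ≤ 1 / 2) :
    maxCrossEnt
        (fun x : Fin 2 => ∑ y : Fin 2,
          (fun q : Fin 2 × Fin 2 => if q.1 = q.2 then (1 - p) / 2 else p / 2) (x, y))
        (fun y : Fin 2 => ∑ x : Fin 2,
          (fun q : Fin 2 × Fin 2 => if q.1 = q.2 then (1 - p) / 2 else p / 2) (x, y))
        (fun q : Fin 2 × Fin 2 => if q.1 = q.2 then (1 - p) / 2 else p / 2)
      = ((Real.log (p / 2)⁻¹ : ℝ) : EReal) ∧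
    entropy (fun q : Fin 2 × Fin 2 => if q.1 = q.2 then (1 - p) / 2 else p / 2)
      = 2 * ((1 - p) / 2) * Real.log ((1 - p) / 2)⁻¹ + 2 * (p / 2) * Real.log (p / 2)⁻¹ ∧
    2 * ((1 - p) / 2) * Real.log ((1 - p) / 2)⁻¹ + 2 * (p / 2) * Real.log (p / 2)⁻¹
      ≤ Real.log (p / 2)⁻¹ ∧
    (2 * ((1 - p) / 2) * Real.log ((1 - p) / 2)⁻¹ + 2 * (p / 2) * Real.log (p / 2)⁻¹
        = Real.log (p / 2)⁻¹ ↔ p = 1 / 2) := by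
  have hα : (0:ℝ) < (1 - p) / 2 := by linarith
  have hβ : (0:ℝ) < p / 2 := by linarith
  have hβα : p / 2 ≤ (1 - p) / 2 := by linarith
  have hlog : Real.log ((1 - p) / 2)⁻¹ ≤ Real.log (p / 2)⁻¹ :=
    Real.log_le_log (by positivity) (by gcongr)
  set π₀ : Fin 2 × Fin 2 → ℝ := fun q => if q.1 = q.2 then (1 - p) / 2 else p / 2 with hπ₀
  have hπpos : ∀ q, 0 < π₀ q := by
    intro q; rw [hπ₀]; dsimp only; split_ifs <;> assumption
  have hπβ : ∀ q, p / 2 ≤ π₀ q := by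
    intro q; rw [hπ₀]; dsimp only; split_ifs <;> [exact hβα; exact le_refl _]
  have hlogπ : ∀ q, Real.log (π₀ q)⁻¹ ≤ Real.log (p / 2)⁻¹ := by
    intro q
    exact Real.log_le_log (by positivity) (inv_anti₀ hβ (hπβ q))
  have key : ∀ Q : Fin 2 × Fin 2 → ℝ,
      (∑ q : Fin 2 × Fin 2, (Q q : EReal) * negLogE (π₀ q))
        = ((∑ q : Fin 2 × Fin 2, Q q * Real.log (π₀ q)⁻¹ : ℝ) : EReal) := by
    intro Q
    rw [ecoe_sum]
    refine Finset.sum_congr rfl fun q _ => ?_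
    rw [negLogE, if_neg (hπpos q).ne', EReal.coe_mul]
  refine ⟨?_, ?_, ?_, ?_⟩
  · apply le_antisymm
    · apply sSup_le
      rintro s ⟨Q, ⟨hQ0, hQX, _⟩, rfl⟩
      rw [key]
      rw [EReal.coe_le_coe_iff]
      have hsum : ∑ q : Fin 2 × Fin 2, Q q = 1 := by
        have h0 := hQX 0
        have h1 := hQX 1
        simp only [Fin.sum_univ_two] at h0 h1
        rw [Fintype.sum_prod_type]
        simp only [Fin.sum_univ_two]
        norm_num [hπ₀] at h0 h1 ⊢
        linarith
      calc ∑ q : Fin 2 × Fin 2, Q q * Real.log (π₀ q)⁻¹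
          ≤ ∑ q : Fin 2 × Fin 2, Q q * Real.log (p / 2)⁻¹ :=
            Finset.sum_le_sum fun q _ => mul_le_mul_of_nonneg_left (hlogπ q) (hQ0 q)
        _ = (∑ q : Fin 2 × Fin 2, Q q) * Real.log (p / 2)⁻¹ := by
            rw [Finset.sum_mul]
        _ = Real.log (p / 2)⁻¹ := by rw [hsum, one_mul]
    · apply le_sSup
      refine ⟨fun q => if q.1 = q.2 then 0 else 1/2, ⟨?_, ?_, ?_⟩, ?_⟩
      · intro q; dsimp only; split_ifs <;> norm_num
      · intro x; fin_cases x <;> (norm_num [Fin.sum_univ_two, hπ₀]; linarith)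
      · intro y; fin_cases y <;> (norm_num [Fin.sum_univ_two, hπ₀]; linarith)
      · rw [key, EReal.coe_eq_coe_iff, Fintype.sum_prod_type]
        simp only [Fin.sum_univ_two]
        norm_num [hπ₀]
        ring
  · unfold entropy
    rw [Fintype.sum_prod_type]
    simp only [Fin.sum_univ_two]
    norm_num [hπ₀]
    ring
  · nlinarith [mul_le_mul_of_nonneg_left hlog (le_of_lt hα)]
  · constructor
    · intro h
      have h3 : 2 * ((1 - p) / 2) * (Real.log (p / 2)⁻¹ - Real.log ((1 - p) / 2)⁻¹) = 0 := by
        nlinarith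
      have hne : 2 * ((1 - p) / 2) ≠ 0 := by
        have : (0:ℝ) < 2 * ((1 - p) / 2) := by linarith
        exact this.ne'
      have h4 : Real.log (p / 2)⁻¹ = Real.log ((1 - p) / 2)⁻¹ := by
        rcases mul_eq_zero.mp h3 with h | h
        · exact absurd h hne
        · linarith
      have h5 : (p / 2)⁻¹ = ((1 - p) / 2)⁻¹ := by
        have := congrArg Real.exp h4
        rwa [Real.exp_log (by positivity), Real.exp_log (by positivity)] at this
      have h6 : p / 2 = (1 - p) / 2 := inv_injective h5
      linarith
    · rintro rfl
      norm_num
      ring
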